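/- Let n = 2s+1 and A = k⟨x₁,…,x_s,y₀,y₁,…,y_s⟩. The 12s² degree-3 elements {y₀h₁(i,j), h₁(i,j)y₀, y₀h₂(i,j), h₂(i,j)y₀, x_iq₁(j), q₁(j)x_i, x_iq₂(j), q₂(j)x_i, y_iq₁(j), q₁(j)y_i, y_iq₂(j), q₂(j)y_i : 1 ≤ i,j ≤ s} are linearly independent in A₃, where h₁(i,j) = x_iy_j, h₂(i,j) = x_ix_j − y_iy_j, q₁(j) = y₀x_j + x_jy₀ + y_jy₀, q₂(j) = y₀y_j + y_jy₀. -/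

import Mathlib

noncomputable section

open FreeAlgebra

/-- `x_i`, for `1 ≤ i ≤ s`, among the generators `x₁,…,x_s,y₀,…,y_s`. -/
def xg (k : Type*) [Field k] (s : ℕ) (i : Fin s) : FreeAlgebra k (Fin s ⊕ Fin (s + 1)) :=
  ι k (Sum.inl i)

/-- `y_i`, for `0 ≤ i ≤ s`. -/
def yg (k : Type*) [Field k] (s : ℕ) (i : Fin (s + 1)) : FreeAlgebra k (Fin s ⊕ Fin (s + 1)) :=
  ι k (Sum.inr i)

/-- `h₁(i,j) = x_i y_j`. -/
def h1 (k : Type*) [Field k] (s : ℕ) (i j : Fin s) : FreeAlgebra k (Fin s ⊕ Fin (s + 1)) :=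
  xg k s i * yg k s j.succ

/-- `h₂(i,j) = x_i x_j - y_i y_j`. -/
def h2 (k : Type*) [Field k] (s : ℕ) (i j : Fin s) : FreeAlgebra k (Fin s ⊕ Fin (s + 1)) :=
  xg k s i * xg k s j - yg k s i.succ * yg k s j.succ

/-- `q₁(j) = y₀x_j + x_jy₀ + y_jy₀`. -/
def q1 (k : Type*) [Field k] (s : ℕ) (j : Fin s) : FreeAlgebra k (Fin s ⊕ Fin (s + 1)) :=
  yg k s 0 * xg k s j + xg k s j * yg k s 0 + yg k s j.succ * yg k s 0

/-- `q₂(j) = y₀y_j + y_jy₀`. -/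
def q2 (k : Type*) [Field k] (s : ℕ) (j : Fin s) : FreeAlgebra k (Fin s ⊕ Fin (s + 1)) :=
  yg k s 0 * yg k s j.succ + yg k s j.succ * yg k s 0

/-- The `12s²` degree-3 elements of `y₀`-degree 1. -/
def fam12 (k : Type*) [Field k] (s : ℕ) :
    Fin s × Fin s × Fin 12 → FreeAlgebra k (Fin s ⊕ Fin (s + 1)) :=
  fun p => ![yg k s 0 * h1 k s p.1 p.2.1, h1 k s p.1 p.2.1 * yg k s 0,
             yg k s 0 * h2 k s p.1 p.2.1, h2 k s p.1 p.2.1 * yg k s 0,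
             xg k s p.1 * q1 k s p.2.1, q1 k s p.2.1 * xg k s p.1,
             xg k s p.1 * q2 k s p.2.1, q2 k s p.2.1 * xg k s p.1,
             yg k s p.1.succ * q1 k s p.2.1, q1 k s p.2.1 * yg k s p.1.succ,
             yg k s p.1.succ * q2 k s p.2.1, q2 k s p.2.1 * yg k s p.1.succ] p.2.2

/-- The `12s²` degree-3 elements listed in `fam12` are linearly independent. -/

noncomputable def phi3 (k : Type*) [Field k] (s : ℕ) (a b c : Fin s ⊕ Fin (s+1)) :
    FreeAlgebra k (Fin s ⊕ Fin (s+1)) →ₗ[k] k :=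
  (Finsupp.lapply (FreeMonoid.of a * FreeMonoid.of b * FreeMonoid.of c)).comp ((MonoidAlgebra.coeffLinearEquiv k).toLinearMap.comp
    (FreeAlgebra.equivMonoidAlgebraFreeMonoid :
      FreeAlgebra k (Fin s ⊕ Fin (s+1)) ≃ₐ[k] _).toLinearMap)

lemma word_eq_iff {α : Type*} (a b c a' b' c' : α) :
    (FreeMonoid.of a * FreeMonoid.of b * FreeMonoid.of c
      = FreeMonoid.of a' * FreeMonoid.of b' * FreeMonoid.of c') ↔ a = a' ∧ b = b' ∧ c = c' := by
  constructor
  · intro h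
    have := congrArg FreeMonoid.toList h
    simpa [FreeMonoid.toList_mul, FreeMonoid.toList_of] using this
  · rintro ⟨rfl, rfl, rfl⟩; rfl

lemma equiv_ι {k : Type*} [Field k] {X : Type*} (x : X) :
    FreeAlgebra.equivMonoidAlgebraFreeMonoid (ι k x)
      = MonoidAlgebra.single (FreeMonoid.of x) (1:k) := by
  simp [FreeAlgebra.equivMonoidAlgebraFreeMonoid]

lemma phi3_triple {k : Type*} [Field k] {s : ℕ} (a b c a' b' c' : Fin s ⊕ Fin (s+1)) :
    phi3 k s a b c (ι k a' * ι k b' * ι k c')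
      = if a' = a ∧ b' = b ∧ c' = c then 1 else 0 := by
  have : phi3 k s a b c (ι k a' * ι k b' * ι k c')
      = (FreeAlgebra.equivMonoidAlgebraFreeMonoid (ι k a' * ι k b' * ι k c')).coeff
          (FreeMonoid.of a * FreeMonoid.of b * FreeMonoid.of c) := rfl
  classical
  have h2 : FreeAlgebra.equivMonoidAlgebraFreeMonoid (ι k a' * ι k b' * ι k c')
      = MonoidAlgebra.single (FreeMonoid.of a' * FreeMonoid.of b' * FreeMonoid.of c') (1:k) := by
    rw [map_mul, map_mul, equiv_ι, equiv_ι, equiv_ι, MonoidAlgebra.single_mul_single,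
      MonoidAlgebra.single_mul_single, one_mul, one_mul]
  rw [this, h2, MonoidAlgebra.single_apply]
  simp [word_eq_iff]


lemma sum_univ_twelve {M : Type*} [AddCommMonoid M] (f : Fin 12 → M) :
    ∑ i, f i = f 0 + f 1 + f 2 + f 3 + f 4 + f 5 + f 6 + f 7 + f 8 + f 9 + f 10 + f 11 := by
  rw [Fin.sum_univ_castSucc, Fin.sum_univ_castSucc, Fin.sum_univ_castSucc, Fin.sum_univ_castSucc,
    Fin.sum_univ_eight]
  rfl

lemma zsucc1 {n : ℕ} (x : Fin n) : (Fin.succ x = 0) ↔ False := by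
  simp [Fin.succ_ne_zero]

lemma zsucc2 {n : ℕ} (x : Fin n) : ((0 : Fin (n+1)) = Fin.succ x) ↔ False := by
  simp [eq_comm, Fin.succ_ne_zero]

lemma sum2a {M : Type*} [AddCommMonoid M] {n m : ℕ} (a : Fin n) (b : Fin m)
    (f : Fin n → Fin m → M) :
    (∑ x, ∑ y, if x = a ∧ y = b then f x y else 0) = f a b := by
  have h : ∀ x y : _, (if x = a ∧ y = b then f x y else 0)
      = if y = b then (if x = a then f x y else 0) else 0 := by
    intro x y
    by_cases h1 : x = a <;> by_cases h2 : y = b <;> simp [h1, h2]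
  simp only [h, Finset.sum_ite_eq', Finset.mem_univ, if_true]

lemma sum2b {M : Type*} [AddCommMonoid M] {n m : ℕ} (a : Fin n) (b : Fin m)
    (f : Fin n → Fin m → M) :
    (∑ x, ∑ y, if y = b ∧ x = a then f x y else 0) = f a b := by
  have h : ∀ x y : _, (if y = b ∧ x = a then f x y else 0)
      = if y = b then (if x = a then f x y else 0) else 0 := by
    intro x y
    by_cases h1 : x = a <;> by_cases h2 : y = b <;> simp [h1, h2]
  simp only [h, Finset.sum_ite_eq', Finset.mem_univ, if_true]

section famlem
variable {k : Type*} [Field k] {s : ℕ} (i j : Fin s)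

lemma fam_0 : fam12 k s (i,j,0) = yg k s 0 * (xg k s i * yg k s j.succ) := rfl
lemma fam_1 : fam12 k s (i,j,1) = (xg k s i * yg k s j.succ) * yg k s 0 := rfl
lemma fam_2 : fam12 k s (i,j,2) =
    yg k s 0 * (xg k s i * xg k s j - yg k s i.succ * yg k s j.succ) := rfl
lemma fam_3 : fam12 k s (i,j,3) =
    (xg k s i * xg k s j - yg k s i.succ * yg k s j.succ) * yg k s 0 := rfl
lemma fam_4 : fam12 k s (i,j,4) = xg k s i * q1 k s j := rfl
lemma fam_5 : fam12 k s (i,j,5) = q1 k s j * xg k s i := rfl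
lemma fam_6 : fam12 k s (i,j,6) = xg k s i * q2 k s j := rfl
lemma fam_7 : fam12 k s (i,j,7) = q2 k s j * xg k s i := rfl
lemma fam_8 : fam12 k s (i,j,8) = yg k s i.succ * q1 k s j := rfl
lemma fam_9 : fam12 k s (i,j,9) = q1 k s j * yg k s i.succ := rfl
lemma fam_10 : fam12 k s (i,j,10) = yg k s i.succ * q2 k s j := rfl
lemma fam_11 : fam12 k s (i,j,11) = q2 k s j * yg k s i.succ := rfl

end famlem

theorem stmt12 (k : Type*) [Field k] (s : ℕ) (hs : 0 < s) :
    LinearIndependent k (fam12 k s) := by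
  rw [Fintype.linearIndependent_iff]
  intro g hg
  have key : ∀ (a b c : Fin s ⊕ Fin (s+1)),
      ∑ i : Fin s, ∑ j : Fin s, ∑ t : Fin 12,
        g (i,j,t) * phi3 k s a b c (fam12 k s (i,j,t)) = 0 := by
    intro a b c
    have h := congrArg (phi3 k s a b c) hg
    simp only [map_sum, map_smul, smul_eq_mul, map_zero, Fintype.sum_prod_type] at h
    exact h
  have c8 : ∀ a b : Fin s, g (a,b,8) = 0 := by
    intro a b
    have h := key (.inr a.succ) (.inl b) (.inr 0)
    simp only [sum_univ_twelve, fam_0, fam_1, fam_2, fam_3, fam_4, fam_5, fam_6, fam_7, fam_8,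
      fam_9, fam_10, fam_11, q1, q2, xg, yg, sub_mul, add_mul, mul_add, mul_sub, ← mul_assoc,
      map_add, map_sub, phi3_triple, Sum.inl.injEq, Sum.inr.injEq, Fin.succ_inj, zsucc1, zsucc2,
      reduceCtorEq, true_and, and_true, false_and, and_false, if_false, if_true, ite_false,
      ite_true, mul_ite, mul_one, mul_zero, mul_neg, neg_mul, neg_neg, Finset.sum_neg_distrib, add_zero, zero_add, sub_zero, zero_sub, neg_zero,
      Finset.sum_add_distrib, Finset.sum_sub_distrib, Finset.sum_const_zero, sum2a, sum2b] at h
    linear_combination h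
  have c7 : ∀ a b : Fin s, g (a,b,7) = 0 := by
    intro a b
    have h := key (.inr 0) (.inr b.succ) (.inl a)
    simp only [sum_univ_twelve, fam_0, fam_1, fam_2, fam_3, fam_4, fam_5, fam_6, fam_7, fam_8,
      fam_9, fam_10, fam_11, q1, q2, xg, yg, sub_mul, add_mul, mul_add, mul_sub, ← mul_assoc,
      map_add, map_sub, phi3_triple, Sum.inl.injEq, Sum.inr.injEq, Fin.succ_inj, zsucc1, zsucc2,
      reduceCtorEq, true_and, and_true, false_and, and_false, if_false, if_true, ite_false,
      ite_true, mul_ite, mul_one, mul_zero, mul_neg, neg_mul, neg_neg, Finset.sum_neg_distrib, add_zero, zero_add, sub_zero, zero_sub, neg_zero,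
      Finset.sum_add_distrib, Finset.sum_sub_distrib, Finset.sum_const_zero, sum2a, sum2b] at h
    linear_combination h
  have c5 : ∀ a b : Fin s, g (a,b,5) = 0 := by
    intro a b
    have h := key (.inr b.succ) (.inr 0) (.inl a)
    simp only [sum_univ_twelve, fam_0, fam_1, fam_2, fam_3, fam_4, fam_5, fam_6, fam_7, fam_8,
      fam_9, fam_10, fam_11, q1, q2, xg, yg, sub_mul, add_mul, mul_add, mul_sub, ← mul_assoc,
      map_add, map_sub, phi3_triple, Sum.inl.injEq, Sum.inr.injEq, Fin.succ_inj, zsucc1, zsucc2,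
      reduceCtorEq, true_and, and_true, false_and, and_false, if_false, if_true, ite_false,
      ite_true, mul_ite, mul_one, mul_zero, mul_neg, neg_mul, neg_neg, Finset.sum_neg_distrib, add_zero, zero_add, sub_zero, zero_sub, neg_zero,
      Finset.sum_add_distrib, Finset.sum_sub_distrib, Finset.sum_const_zero, sum2a, sum2b] at h
    linear_combination h - c7 a b - c8 b a
  have c4 : ∀ a b : Fin s, g (a,b,4) = 0 := by
    intro a b
    have h := key (.inl a) (.inr 0) (.inl b)
    simp only [sum_univ_twelve, fam_0, fam_1, fam_2, fam_3, fam_4, fam_5, fam_6, fam_7, fam_8,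
      fam_9, fam_10, fam_11, q1, q2, xg, yg, sub_mul, add_mul, mul_add, mul_sub, ← mul_assoc,
      map_add, map_sub, phi3_triple, Sum.inl.injEq, Sum.inr.injEq, Fin.succ_inj, zsucc1, zsucc2,
      reduceCtorEq, true_and, and_true, false_and, and_false, if_false, if_true, ite_false,
      ite_true, mul_ite, mul_one, mul_zero, mul_neg, neg_mul, neg_neg, Finset.sum_neg_distrib, add_zero, zero_add, sub_zero, zero_sub, neg_zero,
      Finset.sum_add_distrib, Finset.sum_sub_distrib, Finset.sum_const_zero, sum2a, sum2b] at h
    linear_combination h - c5 b a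
  have c2 : ∀ a b : Fin s, g (a,b,2) = 0 := by
    intro a b
    have h := key (.inr 0) (.inl a) (.inl b)
    simp only [sum_univ_twelve, fam_0, fam_1, fam_2, fam_3, fam_4, fam_5, fam_6, fam_7, fam_8,
      fam_9, fam_10, fam_11, q1, q2, xg, yg, sub_mul, add_mul, mul_add, mul_sub, ← mul_assoc,
      map_add, map_sub, phi3_triple, Sum.inl.injEq, Sum.inr.injEq, Fin.succ_inj, zsucc1, zsucc2,
      reduceCtorEq, true_and, and_true, false_and, and_false, if_false, if_true, ite_false,
      ite_true, mul_ite, mul_one, mul_zero, mul_neg, neg_mul, neg_neg, Finset.sum_neg_distrib, add_zero, zero_add, sub_zero, zero_sub, neg_zero,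
      Finset.sum_add_distrib, Finset.sum_sub_distrib, Finset.sum_const_zero, sum2a, sum2b] at h
    linear_combination h - c5 b a
  have c3 : ∀ a b : Fin s, g (a,b,3) = 0 := by
    intro a b
    have h := key (.inl a) (.inl b) (.inr 0)
    simp only [sum_univ_twelve, fam_0, fam_1, fam_2, fam_3, fam_4, fam_5, fam_6, fam_7, fam_8,
      fam_9, fam_10, fam_11, q1, q2, xg, yg, sub_mul, add_mul, mul_add, mul_sub, ← mul_assoc,
      map_add, map_sub, phi3_triple, Sum.inl.injEq, Sum.inr.injEq, Fin.succ_inj, zsucc1, zsucc2,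
      reduceCtorEq, true_and, and_true, false_and, and_false, if_false, if_true, ite_false,
      ite_true, mul_ite, mul_one, mul_zero, mul_neg, neg_mul, neg_neg, Finset.sum_neg_distrib, add_zero, zero_add, sub_zero, zero_sub, neg_zero,
      Finset.sum_add_distrib, Finset.sum_sub_distrib, Finset.sum_const_zero, sum2a, sum2b] at h
    linear_combination h - c4 a b
  have c11 : ∀ a b : Fin s, g (a,b,11) = 0 := by
    intro a b
    have h := key (.inr 0) (.inr b.succ) (.inr a.succ)
    simp only [sum_univ_twelve, fam_0, fam_1, fam_2, fam_3, fam_4, fam_5, fam_6, fam_7, fam_8,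
      fam_9, fam_10, fam_11, q1, q2, xg, yg, sub_mul, add_mul, mul_add, mul_sub, ← mul_assoc,
      map_add, map_sub, phi3_triple, Sum.inl.injEq, Sum.inr.injEq, Fin.succ_inj, zsucc1, zsucc2,
      reduceCtorEq, true_and, and_true, false_and, and_false, if_false, if_true, ite_false,
      ite_true, mul_ite, mul_one, mul_zero, mul_neg, neg_mul, neg_neg, Finset.sum_neg_distrib, add_zero, zero_add, sub_zero, zero_sub, neg_zero,
      Finset.sum_add_distrib, Finset.sum_sub_distrib, Finset.sum_const_zero, sum2a, sum2b] at h
    linear_combination h + c2 b a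
  have c10 : ∀ a b : Fin s, g (a,b,10) = 0 := by
    intro a b
    have h := key (.inr a.succ) (.inr b.succ) (.inr 0)
    simp only [sum_univ_twelve, fam_0, fam_1, fam_2, fam_3, fam_4, fam_5, fam_6, fam_7, fam_8,
      fam_9, fam_10, fam_11, q1, q2, xg, yg, sub_mul, add_mul, mul_add, mul_sub, ← mul_assoc,
      map_add, map_sub, phi3_triple, Sum.inl.injEq, Sum.inr.injEq, Fin.succ_inj, zsucc1, zsucc2,
      reduceCtorEq, true_and, and_true, false_and, and_false, if_false, if_true, ite_false,
      ite_true, mul_ite, mul_one, mul_zero, mul_neg, neg_mul, neg_neg, Finset.sum_neg_distrib, add_zero, zero_add, sub_zero, zero_sub, neg_zero,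
      Finset.sum_add_distrib, Finset.sum_sub_distrib, Finset.sum_const_zero, sum2a, sum2b] at h
    linear_combination h + c3 a b - c8 a b
  have c9 : ∀ a b : Fin s, g (a,b,9) = 0 := by
    intro a b
    have h := key (.inr b.succ) (.inr 0) (.inr a.succ)
    simp only [sum_univ_twelve, fam_0, fam_1, fam_2, fam_3, fam_4, fam_5, fam_6, fam_7, fam_8,
      fam_9, fam_10, fam_11, q1, q2, xg, yg, sub_mul, add_mul, mul_add, mul_sub, ← mul_assoc,
      map_add, map_sub, phi3_triple, Sum.inl.injEq, Sum.inr.injEq, Fin.succ_inj, zsucc1, zsucc2,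
      reduceCtorEq, true_and, and_true, false_and, and_false, if_false, if_true, ite_false,
      ite_true, mul_ite, mul_one, mul_zero, mul_neg, neg_mul, neg_neg, Finset.sum_neg_distrib, add_zero, zero_add, sub_zero, zero_sub, neg_zero,
      Finset.sum_add_distrib, Finset.sum_sub_distrib, Finset.sum_const_zero, sum2a, sum2b] at h
    linear_combination h - c10 b a - c11 a b
  have c0 : ∀ a b : Fin s, g (a,b,0) = 0 := by
    intro a b
    have h := key (.inr 0) (.inl a) (.inr b.succ)
    simp only [sum_univ_twelve, fam_0, fam_1, fam_2, fam_3, fam_4, fam_5, fam_6, fam_7, fam_8,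
      fam_9, fam_10, fam_11, q1, q2, xg, yg, sub_mul, add_mul, mul_add, mul_sub, ← mul_assoc,
      map_add, map_sub, phi3_triple, Sum.inl.injEq, Sum.inr.injEq, Fin.succ_inj, zsucc1, zsucc2,
      reduceCtorEq, true_and, and_true, false_and, and_false, if_false, if_true, ite_false,
      ite_true, mul_ite, mul_one, mul_zero, mul_neg, neg_mul, neg_neg, Finset.sum_neg_distrib, add_zero, zero_add, sub_zero, zero_sub, neg_zero,
      Finset.sum_add_distrib, Finset.sum_sub_distrib, Finset.sum_const_zero, sum2a, sum2b] at h
    linear_combination h - c9 b a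
  have c6 : ∀ a b : Fin s, g (a,b,6) = 0 := by
    intro a b
    have h := key (.inl a) (.inr 0) (.inr b.succ)
    simp only [sum_univ_twelve, fam_0, fam_1, fam_2, fam_3, fam_4, fam_5, fam_6, fam_7, fam_8,
      fam_9, fam_10, fam_11, q1, q2, xg, yg, sub_mul, add_mul, mul_add, mul_sub, ← mul_assoc,
      map_add, map_sub, phi3_triple, Sum.inl.injEq, Sum.inr.injEq, Fin.succ_inj, zsucc1, zsucc2,
      reduceCtorEq, true_and, and_true, false_and, and_false, if_false, if_true, ite_false,
      ite_true, mul_ite, mul_one, mul_zero, mul_neg, neg_mul, neg_neg, Finset.sum_neg_distrib, add_zero, zero_add, sub_zero, zero_sub, neg_zero,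
      Finset.sum_add_distrib, Finset.sum_sub_distrib, Finset.sum_const_zero, sum2a, sum2b] at h
    linear_combination h - c9 b a
  have c1 : ∀ a b : Fin s, g (a,b,1) = 0 := by
    intro a b
    have h := key (.inl a) (.inr b.succ) (.inr 0)
    simp only [sum_univ_twelve, fam_0, fam_1, fam_2, fam_3, fam_4, fam_5, fam_6, fam_7, fam_8,
      fam_9, fam_10, fam_11, q1, q2, xg, yg, sub_mul, add_mul, mul_add, mul_sub, ← mul_assoc,
      map_add, map_sub, phi3_triple, Sum.inl.injEq, Sum.inr.injEq, Fin.succ_inj, zsucc1, zsucc2,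
      reduceCtorEq, true_and, and_true, false_and, and_false, if_false, if_true, ite_false,
      ite_true, mul_ite, mul_one, mul_zero, mul_neg, neg_mul, neg_neg, Finset.sum_neg_distrib, add_zero, zero_add, sub_zero, zero_sub, neg_zero,
      Finset.sum_add_distrib, Finset.sum_sub_distrib, Finset.sum_const_zero, sum2a, sum2b] at h
    linear_combination h - c4 a b - c6 a b
  rintro ⟨i, j, t⟩
  fin_cases t
  · exact c0 i j
  · exact c1 i j
  · exact c2 i j
  · exact c3 i j
  · exact c4 i j
  · exact c5 i j
  · exact c6 i j
  · exact c7 i j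
  · exact c8 i j
  · exact c9 i j
  · exact c10 i j
  · exact c11 i j
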